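/- The space of continuous paths (Π, d), where Π consists of all paths in the compactified space-time plane R²_c with arbitrary starting times in [-∞,∞], and d is the metric d(π₁,π₂) = |tanh(σ_{π₁}) − tanh(σ_{π₂})| ∨ sup_{t ≥ σ_{π₁}∧σ_{π₂}} |tanh(π₁(t∨σ_{π₁}))/(1+|t|) − tanh(π₂(t∨σ_{π₂}))/(1+|t|)|, is a complete separable metric space. -/

import Mathlib

/- The compactification `R²_c` of the space-time plane, realized concretely as the
closure in `ℝ × ℝ` (with the sup metric) of the image of `ℝ²` under the embedding
`(x,t) ↦ (tanh x / (1+|t|), tanh t)`, so that the metric `ρ` of the paper is the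
product (max) metric of `ℝ × ℝ` restricted to this set. -/
noncomputable def netEmbed : ℝ × ℝ → ℝ × ℝ :=
  fun p => (Real.tanh p.1 / (1 + |p.2|), Real.tanh p.2)

noncomputable def Rc2 : Set (ℝ × ℝ) := closure (Set.range netEmbed)

/- A path in the Brownian-web/net path space `Π`, in compactified coordinates:
`σ ∈ [-1,1]` is the tanh of the starting time, and `f s` represents
`tanh(π(t))/(1+|t|)` where `s = tanh t`.  The conditions state that the trajectory
`s ↦ (f s, s)` is a continuous map into `R²_c` on `[σ,1]`, that the path takes the
value `*` (encoded by first coordinate `0`) at time `+∞`, and at the starting time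
if the latter is `-∞`; outside `[σ,1]` the function `f` is normalized by constancy,
which encodes the convention `π(t ∨ σ_π)` in the definition of the metric `d`. -/
structure NetPath where
  σ : ℝ
  hσ : σ ∈ Set.Icc (-1 : ℝ) 1
  f : ℝ → ℝ
  cont : ContinuousOn f (Set.Icc σ 1)
  mem : ∀ s ∈ Set.Icc σ 1, (f s, s) ∈ Rc2
  eval_top : f 1 = 0
  eval_bot : σ = -1 → f (-1) = 0
  extend : ∀ s : ℝ, f s = f (max σ (min s 1))

open Set Filter Topology

section tanhFacts

lemma tanh_formula (x : ℝ) : Real.tanh x = 1 - 2 / (Real.exp (2*x) + 1) := by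
  have h1 : Real.exp (2*x) = Real.exp x * Real.exp x := by rw [two_mul, Real.exp_add]
  have h2 : (0:ℝ) < Real.exp x := Real.exp_pos x
  rw [Real.tanh_eq_sinh_div_cosh, Real.sinh_eq, Real.cosh_eq, h1, Real.exp_neg]
  have h4 : Real.exp x * Real.exp x + 1 > 0 := by positivity
  field_simp
  ring

lemma tanh_monotone : Monotone Real.tanh := by
  intro a b hab
  rw [tanh_formula, tanh_formula]
  have h1 : (0:ℝ) < Real.exp (2*a) + 1 := by positivity
  have h2 : Real.exp (2*a) ≤ Real.exp (2*b) := Real.exp_le_exp.2 (by linarith)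
  gcongr

lemma neg_one_lt_tanh (x : ℝ) : -1 < Real.tanh x := by
  rw [tanh_formula]
  have h1 : (0:ℝ) < Real.exp (2*x) + 1 := by positivity
  have h2 : 2 / (Real.exp (2*x) + 1) < 2 := by
    rw [div_lt_iff₀ h1]
    nlinarith [Real.exp_pos (2*x)]
  linarith

lemma abs_tanh_le_one (x : ℝ) : |Real.tanh x| ≤ 1 := by
  rw [abs_le]
  constructor
  · exact (neg_one_lt_tanh x).le
  · rw [tanh_formula]
    have : 0 < 2 / (Real.exp (2*x) + 1) := by positivity
    linarith

end tanhFacts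

/-- Any point of `Rc2` whose time coordinate is `-1` (i.e. `t = -∞`) has spatial
coordinate `0`. -/
lemma Rc2_fst_eq_zero_of_bot {a : ℝ} (h : (a, (-1:ℝ)) ∈ Rc2) : a = 0 := by
  obtain ⟨q, hq, hql⟩ := mem_closure_iff_seq_limit.1 h
  choose w hw using hq
  have hq1 : ∀ n, (q n).1 = Real.tanh (w n).1 / (1 + |(w n).2|) := fun n => by
    rw [← hw n]; rfl
  have hq2 : ∀ n, (q n).2 = Real.tanh (w n).2 := fun n => by
    rw [← hw n]; rfl
  have h2 : Tendsto (fun n => Real.tanh (w n).2) atTop (𝓝 (-1)) :=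
    ((continuous_snd.tendsto _).comp hql).congr fun n => hq2 n
  have ht : Tendsto (fun n => (w n).2) atTop atBot := by
    rw [tendsto_atBot]
    intro b
    have hb : (-1:ℝ) < Real.tanh b := neg_one_lt_tanh b
    filter_upwards [h2.eventually_lt_const hb] with n hn
    by_contra hcon
    push_neg at hcon
    exact absurd (tanh_monotone hcon.le) (not_le.2 hn)
  have habs : Tendsto (fun n => |(w n).2|) atTop atTop :=
    tendsto_abs_atBot_atTop.comp ht
  have hinv : Tendsto (fun n => (1 + |(w n).2|)⁻¹) atTop (𝓝 0) :=
    tendsto_inv_atTop_zero.comp (tendsto_atTop_add_const_left _ 1 habs)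
  have hbound : ∀ n, ‖(q n).1‖ ≤ (1 + |(w n).2|)⁻¹ := by
    intro n
    rw [hq1 n, Real.norm_eq_abs, abs_div, abs_of_pos (by positivity : (0:ℝ) < 1 + |(w n).2|)]
    rw [div_le_iff₀ (by positivity), inv_mul_cancel₀ (by positivity : (1:ℝ) + |(w n).2| ≠ 0)]
    exact abs_tanh_le_one _
  have hzero : Tendsto (fun n => (q n).1) atTop (𝓝 0) := squeeze_zero_norm hbound hinv
  have ha : Tendsto (fun n => (q n).1) atTop (𝓝 a) := (continuous_fst.tendsto _).comp hql
  exact tendsto_nhds_unique ha hzero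

namespace NetPath

lemma σ_le_one (π : NetPath) : π.σ ≤ 1 := π.hσ.2
lemma neg_one_le_σ (π : NetPath) : -1 ≤ π.σ := π.hσ.1

lemma clamp_mem (π : NetPath) (s : ℝ) : max π.σ (min s 1) ∈ Set.Icc π.σ 1 :=
  ⟨le_max_left _ _, max_le π.σ_le_one (min_le_right _ _)⟩

lemma f_continuous (π : NetPath) : Continuous π.f := by
  have h : π.f = fun s => π.f (max π.σ (min s 1)) := funext π.extend
  rw [h]
  exact π.cont.comp_continuous
    (continuous_const.max (continuous_id.min continuous_const))
    fun s => π.clamp_mem s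

end NetPath

/-- The isometric embedding of the path space into `ℝ × C([-1,1], ℝ)`. -/
noncomputable def toPair (π : NetPath) : ℝ × C(Set.Icc (-1:ℝ) 1, ℝ) :=
  (π.σ, ⟨fun s => π.f s, π.f_continuous.comp continuous_subtype_val⟩)

lemma toPair_injective : Function.Injective toPair := by
  intro π₁ π₂ h
  have hσ : π₁.σ = π₂.σ := congrArg Prod.fst h
  have hf0 : ∀ s : Set.Icc (-1:ℝ) 1, π₁.f s = π₂.f s := fun s =>
    ContinuousMap.congr_fun (congrArg Prod.snd h) s
  have hf : π₁.f = π₂.f := by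
    funext s
    rw [π₁.extend s, π₂.extend s, hσ]
    have hm : max π₂.σ (min s 1) ∈ Set.Icc (-1:ℝ) 1 :=
      ⟨le_trans π₂.neg_one_le_σ (le_max_left _ _), max_le π₂.σ_le_one (min_le_right _ _)⟩
    exact hf0 ⟨_, hm⟩
  cases π₁; cases π₂
  simp only [NetPath.mk.injEq] at hσ hf ⊢
  exact ⟨hσ, hf⟩

noncomputable def pathMetric : MetricSpace NetPath :=
  MetricSpace.induced toPair toPair_injective inferInstance

lemma toPair_isometry : @Isometry NetPath _ pathMetric.toPseudoEMetricSpace _ toPair :=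
  fun _ _ => rfl

lemma eval_tendsto {gn : ℕ → C(Set.Icc (-1:ℝ) 1, ℝ)} {g : C(Set.Icc (-1:ℝ) 1, ℝ)}
    (hg : Tendsto gn atTop (𝓝 g))
    {xn : ℕ → Set.Icc (-1:ℝ) 1} {x : Set.Icc (-1:ℝ) 1} (hx : Tendsto xn atTop (𝓝 x)) :
    Tendsto (fun n => gn n (xn n)) atTop (𝓝 (g x)) := by
  rw [tendsto_iff_dist_tendsto_zero]
  have h1 : Tendsto (fun n => dist (gn n) g + dist (g (xn n)) (g x)) atTop (𝓝 0) := by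
    have := (tendsto_iff_dist_tendsto_zero.1 hg).add
      (tendsto_iff_dist_tendsto_zero.1 ((g.continuous.tendsto x).comp hx))
    simpa using this
  refine squeeze_zero (fun n => dist_nonneg) (fun n => ?_) h1
  calc dist (gn n (xn n)) (g x)
      ≤ dist (gn n (xn n)) (g (xn n)) + dist (g (xn n)) (g x) := dist_triangle _ _ _
    _ ≤ dist (gn n) g + dist (g (xn n)) (g x) :=
        add_le_add_left (ContinuousMap.dist_apply_le_dist _) _

lemma range_toPair_closed : IsClosed (Set.range toPair) := by
  apply IsSeqClosed.isClosed
  intro x p hx hp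
  choose π hπ using hx
  set σ : ℝ := p.1 with hσdef
  set g : C(Set.Icc (-1:ℝ) 1, ℝ) := p.2 with hgdef
  have hσt : Tendsto (fun n => (π n).σ) atTop (𝓝 σ) :=
    ((continuous_fst.tendsto p).comp hp).congr fun n => by
      simp only [Function.comp_apply, ← hπ]; rfl
  have hgt : Tendsto (fun n => (toPair (π n)).2) atTop (𝓝 g) :=
    ((continuous_snd.tendsto p).comp hp).congr fun n => by
      simp only [Function.comp_apply, ← hπ]
  have hσmem : σ ∈ Set.Icc (-1:ℝ) 1 :=
    isClosed_Icc.mem_of_tendsto hσt (Eventually.of_forall fun n => (π n).hσ)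
  -- the limit function is constant below σ
  have hmax_mem : ∀ (τ : ℝ), τ ≤ 1 → ∀ u : Set.Icc (-1:ℝ) 1,
      max τ (u:ℝ) ∈ Set.Icc (-1:ℝ) 1 := fun τ hτ u =>
    ⟨le_trans u.2.1 (le_max_right _ _), max_le hτ u.2.2⟩
  have hext : ∀ n (u : Set.Icc (-1:ℝ) 1),
      (π n).f u = (π n).f (max (π n).σ u) := by
    intro n u
    have : min (u:ℝ) 1 = (u:ℝ) := min_eq_left u.2.2
    rw [(π n).extend u, this]
  have hconst : ∀ u : Set.Icc (-1:ℝ) 1,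
      g u = g ⟨max σ u, hmax_mem σ hσmem.2 u⟩ := by
    intro u
    have hxt : Tendsto (fun n => (⟨max (π n).σ u, hmax_mem _ (π n).σ_le_one u⟩ :
        Set.Icc (-1:ℝ) 1)) atTop (𝓝 ⟨max σ u, hmax_mem σ hσmem.2 u⟩) := by
      rw [tendsto_subtype_rng]
      exact hσt.max tendsto_const_nhds
    have h1 : Tendsto (fun n => (toPair (π n)).2 u) atTop (𝓝 (g u)) :=
      eval_tendsto hgt tendsto_const_nhds
    have h2 : Tendsto (fun n => (toPair (π n)).2 u) atTop
        (𝓝 (g ⟨max σ u, hmax_mem σ hσmem.2 u⟩)) := by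
      have h3 := eval_tendsto hgt hxt
      refine h3.congr fun n => ?_
      show (π n).f _ = (π n).f u
      exact (hext n u).symm
    exact tendsto_nhds_unique h1 h2
  -- construct the limit path
  have hclampK : ∀ s : ℝ, max (-1) (min s 1) ∈ Set.Icc (-1:ℝ) 1 :=
    fun s => ⟨le_max_left _ _, max_le (by norm_num) (min_le_right _ _)⟩
  set f : ℝ → ℝ := fun s => g ⟨max (-1) (min s 1), hclampK s⟩ with hfdef
  have hfK : ∀ (s : ℝ) (hs : s ∈ Set.Icc (-1:ℝ) 1), f s = g ⟨s, hs⟩ := by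
    intro s hs
    have : max (-1) (min s 1) = s := by
      rw [min_eq_left hs.2, max_eq_right hs.1]
    simp only [hfdef]
    congr 1
    exact Subtype.ext this
  have hfcont : Continuous f := by
    apply g.continuous.comp
    apply Continuous.subtype_mk
    exact continuous_const.max (continuous_id.min continuous_const)
  have hsubset : Set.Icc σ 1 ⊆ Set.Icc (-1:ℝ) 1 := Set.Icc_subset_Icc hσmem.1 le_rfl
  have hmem : ∀ s ∈ Set.Icc σ 1, (f s, s) ∈ Rc2 := by
    intro s hs
    have hsK : s ∈ Set.Icc (-1:ℝ) 1 := hsubset hs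
    rw [hfK s hsK]
    have hfst : Tendsto (fun n => (π n).f (max (π n).σ s)) atTop (𝓝 (g ⟨s, hsK⟩)) := by
      have hxt : Tendsto (fun n => (⟨max (π n).σ s, hmax_mem _ (π n).σ_le_one ⟨s, hsK⟩⟩ :
          Set.Icc (-1:ℝ) 1)) atTop (𝓝 ⟨max σ s, hmax_mem σ hσmem.2 ⟨s, hsK⟩⟩) := by
        rw [tendsto_subtype_rng]
        exact hσt.max tendsto_const_nhds
      have h3 := eval_tendsto hgt hxt
      have h4 : (⟨max σ s, hmax_mem σ hσmem.2 ⟨s, hsK⟩⟩ : Set.Icc (-1:ℝ) 1) = ⟨s, hsK⟩ :=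
        Subtype.ext (max_eq_right hs.1)
      rw [h4] at h3
      exact h3
    have hsnd : Tendsto (fun n => max (π n).σ s) atTop (𝓝 s) := by
      have := hσt.max (tendsto_const_nhds (x := s))
      rw [max_eq_right hs.1] at this
      exact this
    exact isClosed_closure.mem_of_tendsto (hfst.prodMk_nhds hsnd)
      (Eventually.of_forall fun n => (π n).mem _
        ⟨le_max_left _ _, max_le (π n).σ_le_one hsK.2⟩)
  have h1K : (1:ℝ) ∈ Set.Icc (-1:ℝ) 1 := by norm_num
  have heval_top : f 1 = 0 := by
    rw [hfK 1 h1K]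
    have h1 : Tendsto (fun n => (toPair (π n)).2 ⟨1, h1K⟩) atTop (𝓝 (g ⟨1, h1K⟩)) :=
      eval_tendsto hgt tendsto_const_nhds
    have h2 : (fun n => (toPair (π n)).2 ⟨1, h1K⟩) = fun _ => (0:ℝ) := by
      funext n
      show (π n).f 1 = 0
      exact (π n).eval_top
    rw [h2] at h1
    exact tendsto_nhds_unique h1 tendsto_const_nhds
  refine ⟨⟨σ, hσmem, f, hfcont.continuousOn, hmem, heval_top, ?_, ?_⟩, ?_⟩
  · -- eval_bot
    intro hσ1
    have hm : (-1:ℝ) ∈ Set.Icc σ 1 := ⟨hσ1.le, by norm_num⟩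
    exact Rc2_fst_eq_zero_of_bot (hmem (-1) hm)
  · -- extend
    intro s
    show g _ = g _
    have hmin : min (max (-1) (min s 1)) 1 = max (-1) (min s 1) :=
      min_eq_left (hclampK s).2
    have harg : max (-1) (min (max σ (min s 1)) 1) = max σ (max (-1) (min s 1)) := by
      have h1 : min (max σ (min s 1)) 1 = max σ (min s 1) :=
        min_eq_left (max_le hσmem.2 (min_le_right _ _))
      rw [h1, max_eq_right (le_trans hσmem.1 (le_max_left _ _)), ← max_assoc,
        max_eq_left hσmem.1]
    calc g ⟨max (-1) (min s 1), hclampK s⟩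
        = g ⟨max σ (max (-1) (min s 1)), hmax_mem σ hσmem.2 ⟨_, hclampK s⟩⟩ :=
          hconst ⟨max (-1) (min s 1), hclampK s⟩
      _ = g ⟨max (-1) (min (max σ (min s 1)) 1), hclampK _⟩ := by
          congr 1
          exact Subtype.ext harg.symm
  · -- toPair of the constructed path is p
    show toPair _ = p
    refine Prod.ext rfl ?_
    refine ContinuousMap.ext fun u => ?_
    show f u = g u
    rw [hfK u u.2]


set_option synthInstance.maxHeartbeats 1000000 in
/-- **(Π, d) is a complete separable metric space.**  There is a metric on the path
space `Π` whose distance function is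
`d(π₁,π₂) = |tanh σ₁ − tanh σ₂| ∨ sup_t |tanh π₁(t∨σ₁)/(1+|t|) − tanh π₂(t∨σ₂)/(1+|t|)|`
(expressed here in compactified coordinates), and with this metric `Π` is complete
and separable. -/
theorem path_space_complete_separable :
    ∃ m : MetricSpace NetPath,
      (∀ π₁ π₂ : NetPath,
        m.toDist.dist π₁ π₂ =
          max |π₁.σ - π₂.σ| (⨆ s : Set.Icc (-1 : ℝ) 1, |π₁.f s - π₂.f s|)) ∧
      @CompleteSpace NetPath m.toUniformSpace ∧
      @TopologicalSpace.SeparableSpace NetPath m.toUniformSpace.toTopologicalSpace := by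
  refine ⟨pathMetric, ?_, ?_, ?_⟩
  · intro π₁ π₂
    show dist (toPair π₁) (toPair π₂) = _
    rw [Prod.dist_eq, Real.dist_eq]
    congr 1
    rw [dist_eq_norm, ContinuousMap.norm_eq_iSup_norm]
    simp only [ContinuousMap.sub_apply, Real.norm_eq_abs]
    rfl
  · letI := pathMetric
    rw [completeSpace_iff_isComplete_range toPair_isometry.isUniformInducing]
    exact range_toPair_closed.isComplete
  · letI := pathMetric
    have hind : @Topology.IsInducing NetPath _ pathMetric.toUniformSpace.toTopologicalSpace _
        toPair := toPair_isometry.isUniformInducing.isInducing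
    haveI : SecondCountableTopology (ℝ × C(Set.Icc (-1:ℝ) 1, ℝ)) :=
      UniformSpace.secondCountable_of_separable _
    haveI := hind.secondCountableTopology
    exact @TopologicalSpace.SecondCountableTopology.to_separableSpace _
      pathMetric.toUniformSpace.toTopologicalSpace _
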